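/- Let λ > 0 and V*_λ := (Σ + λI − γΣ₁)^{-1} b. Let V : ℝ → H be differentiable with V(0) = 0 and V′(t) = (γΣ₁ − Σ − λI)V(t) + b for all t ≥ 0. Then for every T ≥ 0, ‖V(T) − V*_λ‖² ≤ ‖V*_λ‖² · e^{−2λT}. -/

import Mathlib

open scoped InnerProductSpace

/-- Prop. 6, regularized case: let `λ > 0`,
`V*_λ = (Σ + λI - γΣ₁)⁻¹ b` (characterized by `(Σ + λI - γΣ₁) V*_λ = b`), and let
`V : ℝ → H` be differentiable with `V(0) = 0` and `V'(t) = (γΣ₁ - Σ - λI)V(t) + b`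
for all `t ≥ 0`.  Then for every `T ≥ 0`, `‖V(T) - V*_λ‖² ≤ ‖V*_λ‖² e^{-2λT}`. -/
theorem td_ode_linear_convergence
    {H : Type*} [NormedAddCommGroup H] [InnerProductSpace ℝ H] [CompleteSpace H]
    (Sig S T1 Sig1 : H →L[ℝ] H)
    (hSigSA : IsSelfAdjoint Sig) (hSigPos : ∀ f : H, 0 ≤ ⟪f, Sig f⟫_ℝ)
    (hSsa : IsSelfAdjoint S) (hSpos : ∀ f : H, 0 ≤ ⟪f, S f⟫_ℝ) (hSsq : S * S = Sig)
    (hT1 : ‖T1‖ ≤ 1) (hSig1 : Sig1 = S * T1 * S)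
    (γ : ℝ) (hγ0 : 0 ≤ γ) (hγ1 : γ < 1) (b : H)
    (lam : ℝ) (hlam : 0 < lam)
    (Vlam : H) (hVlam : (Sig + lam • 1 - γ • Sig1) Vlam = b)
    (V : ℝ → H) (hVdiff : Differentiable ℝ V) (hV0 : V 0 = 0)
    (hODE : ∀ t : ℝ, 0 ≤ t → HasDerivAt V ((γ • Sig1 - Sig - lam • 1) (V t) + b) t)
    (T : ℝ) (hT : 0 ≤ T) :
    ‖V T - Vlam‖ ^ 2 ≤ ‖Vlam‖ ^ 2 * Real.exp (-2 * lam * T) := by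
  set A : H →L[ℝ] H := γ • Sig1 - Sig - lam • 1 with hA
  -- key dissipativity inequality
  have hkey : ∀ f : H, ⟪f, A f⟫_ℝ ≤ -lam * ⟪f, f⟫_ℝ := by
    intro f
    have h1 : ⟪f, Sig1 f⟫_ℝ ≤ ⟪f, Sig f⟫_ℝ := by
      have hadj : ∀ x y : H, ⟪x, S y⟫_ℝ = ⟪S x, y⟫_ℝ := fun x y => by
        conv_lhs => rw [← hSsa.adjoint_eq]
        exact ContinuousLinearMap.adjoint_inner_right S x y
      have hSf : ⟪f, Sig1 f⟫_ℝ = ⟪S f, T1 (S f)⟫_ℝ := by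
        rw [hSig1]
        simp only [ContinuousLinearMap.mul_apply]
        rw [hadj]
      have hSig : ⟪f, Sig f⟫_ℝ = ⟪S f, S f⟫_ℝ := by
        rw [← hSsq]
        simp only [ContinuousLinearMap.mul_apply]
        rw [hadj]
      rw [hSf, hSig, real_inner_self_eq_norm_sq]
      calc ⟪S f, T1 (S f)⟫_ℝ ≤ ‖S f‖ * ‖T1 (S f)‖ := real_inner_le_norm _ _
        _ ≤ ‖S f‖ * (1 * ‖S f‖) := by
            gcongr
            calc ‖T1 (S f)‖ ≤ ‖T1‖ * ‖S f‖ := T1.le_opNorm _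
              _ ≤ 1 * ‖S f‖ := by gcongr
        _ = ‖S f‖ ^ 2 := by ring
    have h2 : ⟪f, A f⟫_ℝ = γ * ⟪f, Sig1 f⟫_ℝ - ⟪f, Sig f⟫_ℝ - lam * ⟪f, f⟫_ℝ := by
      rw [hA]
      simp only [ContinuousLinearMap.sub_apply, ContinuousLinearMap.smul_apply,
        ContinuousLinearMap.one_apply, inner_sub_right, inner_smul_right]
    rw [h2]
    nlinarith [hSigPos f, mul_le_mul_of_nonneg_left h1 hγ0]
  -- W and its derivative
  set W : ℝ → H := fun t => V t - Vlam with hW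
  have hWderiv : ∀ t : ℝ, 0 ≤ t → HasDerivAt W (A (W t)) t := by
    intro t ht
    have h := (hODE t ht).sub_const Vlam
    convert h using 1
    have : A Vlam = -b := by
      have : (Sig + lam • 1 - γ • Sig1) = -A := by rw [hA]; abel
      rw [this] at hVlam
      simp only [ContinuousLinearMap.neg_apply] at hVlam
      linear_combination (norm := module) -hVlam
    rw [hW]
    simp only [map_sub, this]
    abel
  set g : ℝ → ℝ := fun t => Real.exp (2 * lam * t) * ⟪W t, W t⟫_ℝ with hg
  have hgderiv : ∀ t : ℝ, 0 ≤ t →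
      HasDerivAt g (Real.exp (2 * lam * t) * (2 * lam * ⟪W t, W t⟫_ℝ +
        (⟪W t, A (W t)⟫_ℝ + ⟪A (W t), W t⟫_ℝ))) t := by
    intro t ht
    have he : HasDerivAt (fun t : ℝ => Real.exp (2 * lam * t))
        (2 * lam * Real.exp (2 * lam * t)) t := by
      have := ((hasDerivAt_id t).const_mul (2 * lam)).exp
      simp only [id] at this
      convert this using 1
      ring
    have hi : HasDerivAt (fun t => ⟪W t, W t⟫_ℝ)
        (⟪W t, A (W t)⟫_ℝ + ⟪A (W t), W t⟫_ℝ) t :=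
      (hWderiv t ht).inner ℝ (hWderiv t ht)
    have : HasDerivAt (fun y => Real.exp (2 * lam * y) * ⟪W y, W y⟫_ℝ) _ t := he.mul hi
    convert this using 1
    ring
  -- g is antitone on [0, ∞)
  have hWdiff : Differentiable ℝ W := fun t => (hVdiff t).sub_const Vlam
  have hgdiff : Differentiable ℝ g := by
    have : Differentiable ℝ (fun t => ⟪W t, W t⟫_ℝ) := hWdiff.inner ℝ hWdiff
    exact (Real.differentiable_exp.comp (differentiable_id.const_mul (2*lam))).mul this
  have hanti : AntitoneOn g (Set.Ici 0) := by
    apply antitoneOn_of_deriv_nonpos (convex_Ici 0) hgdiff.continuous.continuousOn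
      hgdiff.differentiableOn
    intro x hx
    rw [interior_Ici] at hx
    have hx0 : (0 : ℝ) ≤ x := le_of_lt hx
    rw [(hgderiv x hx0).deriv]
    have h1 : ⟪W x, A (W x)⟫_ℝ ≤ -lam * ⟪W x, W x⟫_ℝ := hkey _
    have h2 : ⟪A (W x), W x⟫_ℝ ≤ -lam * ⟪W x, W x⟫_ℝ := by
      rw [real_inner_comm]; exact hkey _
    have he : (0:ℝ) < Real.exp (2 * lam * x) := Real.exp_pos _
    nlinarith
  have hgT : g T ≤ g 0 := hanti Set.self_mem_Ici hT hT
  have hg0 : g 0 = ‖Vlam‖ ^ 2 := by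
    simp only [hg, hW, hV0, mul_zero, Real.exp_zero, zero_sub, inner_neg_neg, one_mul,
      real_inner_self_eq_norm_sq, norm_neg]
  have hgT' : g T = Real.exp (2 * lam * T) * ‖W T‖ ^ 2 := by
    simp only [hg, real_inner_self_eq_norm_sq]
  rw [hg0, hgT'] at hgT
  have heT : (0:ℝ) < Real.exp (2 * lam * T) := Real.exp_pos _
  have : Real.exp (-2 * lam * T) = (Real.exp (2 * lam * T))⁻¹ := by
    rw [← Real.exp_neg]; ring_nf
  rw [this, ← div_eq_mul_inv, le_div_iff₀ heT]
  calc ‖V T - Vlam‖ ^ 2 * Real.exp (2 * lam * T)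
      = Real.exp (2 * lam * T) * ‖W T‖ ^ 2 := by rw [hW]; ring
    _ ≤ ‖Vlam‖ ^ 2 := hgT
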